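/- Let (Ω,𝒜,ℙ) be a probability space, let ℬ and 𝒞 be sub-σ-fields of 𝒜, and set ψ(ℬ,𝒞) := sup{|ℙ(B∩C)/(ℙ(B)ℙ(C)) − 1| : B∈ℬ, C∈𝒞, ℙ(B)>0, ℙ(C)>0}. Let X be a nonnegative ℬ-measurable random variable and Y a nonnegative 𝒞-measurable random variable. Then (i) ∫ X·Y dℙ ≤ (1+ψ(ℬ,𝒞))·(∫ X dℙ)·(∫ Y dℙ), and (ii) if ψ(ℬ,𝒞) < 1, then (∫ X dℙ)·(∫ Y dℙ) ≤ (∫ X·Y dℙ)/(1−ψ(ℬ,𝒞)). -/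

import Mathlib

open MeasureTheory Filter Topology ENNReal

noncomputable section

/-- Birkhoff sum `S_n χ = ∑_{k=1}^n χ ∘ T^{k-1}`. -/
def birkhoffSumN {Ω : Type*} (T : Ω → Ω) (χ : Ω → ℝ) (n : ℕ) (ω : Ω) : ℝ :=
  ∑ k ∈ Finset.range n, χ (T^[k] ω)

/-- Trimmed sum `S_n^b χ`: the sum of the `n - b` smallest values among
`χ(ω), χ(Tω), …, χ(T^{n-1}ω)`. -/
def trimmedSumN {Ω : Type*} (T : Ω → Ω) (χ : Ω → ℝ) (n b : ℕ) (ω : Ω) : ℝ :=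
  (((((List.range n).map fun k => χ (T^[k] ω))).mergeSort (fun a b => a ≤ b)).take (n - b)).sum

/-- Truncated sum `T_n^f χ = ∑_{k=1}^n (χ·1_{χ ≤ f}) ∘ T^{k-1}`. -/
def truncSumN {Ω : Type*} (T : Ω → Ω) (χ : Ω → ℝ) (n : ℕ) (f : ℝ) (ω : Ω) : ℝ :=
  ∑ k ∈ Finset.range n, if χ (T^[k] ω) ≤ f then χ (T^[k] ω) else 0

/-- A function `L` is slowly varying if `L(cx)/L(x) → 1` as `x → ∞`, for every `c > 0`. -/
def SlowlyVarying (L : ℝ → ℝ) : Prop :=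
  ∀ c : ℝ, 0 < c → Tendsto (fun x => L (c * x) / L x) atTop (𝓝 1)

/-- `ls` is a de Bruijn conjugate of the slowly varying function `Lt`. -/
def IsDeBruijnConjugate (Lt ls : ℝ → ℝ) : Prop :=
  SlowlyVarying ls ∧
  Tendsto (fun x => Lt x * ls (x * Lt x)) atTop (𝓝 1) ∧
  Tendsto (fun x => ls x * Lt (x * ls x)) atTop (𝓝 1)

/-- The measure of dependence `ψ(ℬ,𝒞)` between two sub-σ-fields. -/
def psiDep {Ω : Type*} [MeasurableSpace Ω] (μ : Measure Ω)
    (B C : MeasurableSpace Ω) : ℝ≥0∞ :=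
  ⨆ (b : Set Ω) (c : Set Ω) (_ : MeasurableSet[B] b) (_ : MeasurableSet[C] c)
    (_ : 0 < μ b) (_ : 0 < μ c),
    ENNReal.ofReal |(μ (b ∩ c)).toReal / ((μ b).toReal * (μ c).toReal) - 1|

/-- The σ-field generated by `X_k = χ ∘ T^{k-1}` for `J ≤ k ≤ L`. -/
def sigmaIcc {Ω : Type*} [MeasurableSpace Ω] (T : Ω → Ω) (χ : Ω → ℝ) (J L : ℕ) :
    MeasurableSpace Ω :=
  ⨆ k ∈ Set.Icc J L, MeasurableSpace.comap (fun ω => χ (T^[k - 1] ω)) inferInstance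

/-- The σ-field generated by `X_k = χ ∘ T^{k-1}` for `k ≥ J`. -/
def sigmaIci {Ω : Type*} [MeasurableSpace Ω] (T : Ω → Ω) (χ : Ω → ℝ) (J : ℕ) :
    MeasurableSpace Ω :=
  ⨆ k ∈ Set.Ici J, MeasurableSpace.comap (fun ω => χ (T^[k - 1] ω)) inferInstance

/-- The `n`-th ψ-mixing coefficient of the sequence `(χ ∘ T^{k-1})_{k ≥ 1}`. -/
def psiCoeff {Ω : Type*} [MeasurableSpace Ω] (μ : Measure Ω) (T : Ω → Ω) (χ : Ω → ℝ)
    (n : ℕ) : ℝ≥0∞ :=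
  ⨆ (k : ℕ) (_ : 1 ≤ k), psiDep μ (sigmaIcc T χ 1 k) (sigmaIci T χ (k + n))

/-- A bounded operator `U` has a spectral gap: `U = λ·P + N` with `P` a one-dimensional
projection, `ρ(N) < |λ|`, and `PN = NP = 0`. -/
def HasSpectralGap {F : Type*} [NormedAddCommGroup F] [NormedSpace ℝ F] [CompleteSpace F]
    (U : F →L[ℝ] F) : Prop :=
  ∃ (lam : ℝ) (P N : F →L[ℝ] F),
    U = lam • P + N ∧ P.comp P = P ∧
    Module.finrank ℝ (LinearMap.range (P : F →ₗ[ℝ] F)) = 1 ∧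
    spectralRadius ℝ N < ENNReal.ofReal |lam| ∧
    P.comp N = 0 ∧ N.comp P = 0

/-- Property ℭ: `μ` is a `T`-invariant mixing probability measure, `ℱ` (realized as a Banach
algebra `F` of measurable functions via the injective algebra homomorphism `ι`) contains the
constants, dominates the sup norm, and the transfer operator restricts to a bounded operator
on `F` with a spectral gap. -/
structure PropertyC {Ω : Type*} [MeasurableSpace Ω] (T : Ω → Ω) (μ : Measure Ω)
    {F : Type*} [NormedRing F] [NormedAlgebra ℝ F] [CompleteSpace F]
    (ι : F →ₐ[ℝ] Ω → ℝ) : Prop where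
  prob : IsProbabilityMeasure μ
  invariant : MeasurePreserving T μ μ
  mixing : ∀ A B : Set Ω, MeasurableSet A → MeasurableSet B →
    Tendsto (fun n => μ (A ∩ T^[n] ⁻¹' B)) atTop (𝓝 (μ A * μ B))
  inj : Function.Injective ι
  measurable_mem : ∀ f : F, Measurable (ι f)
  norm_ge_sup : ∀ (f : F) (ω : Ω), |ι f ω| ≤ ‖f‖
  transfer : ∃ That : F →L[ℝ] F,
    (∀ (f : F) (g : Ω → ℝ), Measurable g → (∃ C, ∀ ω, |g ω| ≤ C) →
      ∫ ω, ι (That f) ω * g ω ∂μ = ∫ ω, ι f ω * g (T ω) ∂μ) ∧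
    HasSpectralGap That

/-- Property 𝔇: Property ℭ together with the norm control on truncations of the
nonnegative observable `χ`. -/
structure PropertyD {Ω : Type*} [MeasurableSpace Ω] (T : Ω → Ω) (μ : Measure Ω)
    {F : Type*} [NormedRing F] [NormedAlgebra ℝ F] [CompleteSpace F]
    (ι : F →ₐ[ℝ] Ω → ℝ) (χ : Ω → ℝ) extends PropertyC T μ ι : Prop where
  chi_nonneg : ∀ ω, 0 ≤ χ ω
  chi_meas : Measurable χ
  norm_bound : ∃ K₁ > (0 : ℝ), ∀ ℓ : ℝ, 0 ≤ ℓ →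
    (∃ f : F, ι f = (fun ω => if χ ω ≤ ℓ then χ ω else 0) ∧ ‖f‖ ≤ K₁ * ℓ) ∧
    (∃ g : F, ι g = (fun ω => if ℓ < χ ω then (1 : ℝ) else 0) ∧ ‖g‖ ≤ K₁)

/-- The distribution function `F(x) = μ(χ ≤ x)`. -/
def distF {Ω : Type*} [MeasurableSpace Ω] (μ : Measure Ω) (χ : Ω → ℝ) (x : ℝ) : ℝ :=
  (μ {ω | χ ω ≤ x}).toReal

/-- Generalized inverse `F^←(y) = inf {x | F(x) ≥ y}`. -/
def genInv (F : ℝ → ℝ) (y : ℝ) : ℝ := sInf {x : ℝ | y ≤ F x}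

/-- `g_n = F^←(1 - (b_n - ζ_n)/n)` where `ζ_n = b_n^{2/3}`. -/
def gSeq {Ω : Type*} [MeasurableSpace Ω] (μ : Measure Ω) (χ : Ω → ℝ) (b : ℕ → ℕ)
    (n : ℕ) : ℝ :=
  genInv (distF μ χ) (1 - ((b n : ℝ) - (b n : ℝ) ^ ((2 : ℝ) / 3)) / n)

/-- The norming sequence `d_n = (α/(1-α))·n^{1/α}·b_n^{1-1/α}·ℓ^#((n/b_n)^{1/α})`. -/
def dSeq (α : ℝ) (ls : ℝ → ℝ) (b : ℕ → ℕ) (n : ℕ) : ℝ :=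
  α / (1 - α) * (n : ℝ) ^ (1 / α) * (b n : ℝ) ^ (1 - 1 / α) *
    ls (((n : ℝ) / (b n : ℝ)) ^ (1 / α))

end

section Aux
variable {Ω : Type*} (B C : MeasurableSpace Ω) [m : MeasurableSpace Ω] (P : Measure Ω)
  [IsProbabilityMeasure P]

lemma psi_set_upper (b c : Set Ω) (hb : MeasurableSet[B] b) (hc : MeasurableSet[C] c) :
    P (b ∩ c) ≤ (1 + psiDep P B C) * (P b * P c) := by
  by_cases hb0 : P b = 0
  · have : P (b ∩ c) = 0 := measure_mono_null Set.inter_subset_left hb0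
    simp [this]
  by_cases hc0 : P c = 0
  · have : P (b ∩ c) = 0 := measure_mono_null Set.inter_subset_right hc0
    simp [this]
  set p := (P b).toReal with hp_def
  set q := (P c).toReal with hq_def
  set r := (P (b ∩ c)).toReal with hr_def
  have hp : 0 < p := ENNReal.toReal_pos hb0 (measure_ne_top P b)
  have hq : 0 < q := ENNReal.toReal_pos hc0 (measure_ne_top P c)
  set δ := |r / (p * q) - 1| with hδ_def
  have hψ : ENNReal.ofReal δ ≤ psiDep P B C := by
    unfold psiDep
    exact le_iSup_of_le b (le_iSup_of_le c (le_iSup_of_le hb (le_iSup_of_le hc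
      (le_iSup_of_le (pos_iff_ne_zero.mpr hb0) (le_iSup_of_le (pos_iff_ne_zero.mpr hc0)
        le_rfl)))))
  have h1 : r ≤ (1 + δ) * (p * q) := by
    have h := le_abs_self (r / (p * q) - 1)
    have hpq : (0 : ℝ) < p * q := mul_pos hp hq
    rw [← div_le_iff₀ hpq] at *
    linarith
  have hPb : P b = ENNReal.ofReal p := (ENNReal.ofReal_toReal (measure_ne_top P b)).symm
  have hPc : P c = ENNReal.ofReal q := (ENNReal.ofReal_toReal (measure_ne_top P c)).symm
  calc P (b ∩ c) = ENNReal.ofReal r :=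
        (ENNReal.ofReal_toReal (measure_ne_top P _)).symm
    _ ≤ ENNReal.ofReal ((1 + δ) * (p * q)) := ENNReal.ofReal_le_ofReal h1
    _ = ENNReal.ofReal (1 + δ) * ENNReal.ofReal (p * q) :=
        ENNReal.ofReal_mul (by positivity)
    _ = (1 + ENNReal.ofReal δ) * (P b * P c) := by
        rw [ENNReal.ofReal_add zero_le_one (abs_nonneg _), ENNReal.ofReal_one,
          ENNReal.ofReal_mul hp.le, hPb, hPc]
    _ ≤ (1 + psiDep P B C) * (P b * P c) :=
        mul_le_mul_left (add_le_add_right hψ 1) _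

lemma psi_set_lower (b c : Set Ω) (hb : MeasurableSet[B] b) (hc : MeasurableSet[C] c) :
    (1 - psiDep P B C) * (P b * P c) ≤ P (b ∩ c) := by
  by_cases hb0 : P b = 0
  · simp [hb0]
  by_cases hc0 : P c = 0
  · simp [hc0]
  set p := (P b).toReal with hp_def
  set q := (P c).toReal with hq_def
  set r := (P (b ∩ c)).toReal with hr_def
  have hp : 0 < p := ENNReal.toReal_pos hb0 (measure_ne_top P b)
  have hq : 0 < q := ENNReal.toReal_pos hc0 (measure_ne_top P c)
  set δ := |r / (p * q) - 1| with hδ_def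
  have hψ : ENNReal.ofReal δ ≤ psiDep P B C := by
    unfold psiDep
    exact le_iSup_of_le b (le_iSup_of_le c (le_iSup_of_le hb (le_iSup_of_le hc
      (le_iSup_of_le (pos_iff_ne_zero.mpr hb0) (le_iSup_of_le (pos_iff_ne_zero.mpr hc0)
        le_rfl)))))
  have hkey : 1 - psiDep P B C ≤ ENNReal.ofReal (1 - δ) := by
    calc 1 - psiDep P B C ≤ 1 - ENNReal.ofReal δ := tsub_le_tsub_left hψ 1
      _ = ENNReal.ofReal (1 - δ) := by
        rw [ENNReal.ofReal_sub 1 (abs_nonneg _), ENNReal.ofReal_one]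
  have hPb : P b = ENNReal.ofReal p := (ENNReal.ofReal_toReal (measure_ne_top P b)).symm
  have hPc : P c = ENNReal.ofReal q := (ENNReal.ofReal_toReal (measure_ne_top P c)).symm
  by_cases hδ1 : 1 - δ ≤ 0
  · calc (1 - psiDep P B C) * (P b * P c)
        ≤ ENNReal.ofReal (1 - δ) * (P b * P c) := mul_le_mul_left hkey _
      _ = 0 := by rw [ENNReal.ofReal_eq_zero.mpr hδ1, zero_mul]
      _ ≤ P (b ∩ c) := by positivity
  push_neg at hδ1
  have h2 : (1 - δ) * (p * q) ≤ r := by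
    have h := neg_abs_le (r / (p * q) - 1)
    have hpq : (0 : ℝ) < p * q := mul_pos hp hq
    have : 1 - δ ≤ r / (p * q) := by
      have : -δ ≤ r / (p * q) - 1 := h
      linarith
    calc (1 - δ) * (p * q) ≤ (r / (p * q)) * (p * q) :=
          mul_le_mul_of_nonneg_right this hpq.le
      _ = r := div_mul_cancel₀ r hpq.ne'
  calc (1 - psiDep P B C) * (P b * P c)
      ≤ ENNReal.ofReal (1 - δ) * (P b * P c) := mul_le_mul_left hkey _
    _ = ENNReal.ofReal ((1 - δ) * (p * q)) := by
        rw [ENNReal.ofReal_mul hδ1.le, hPb, hPc, ENNReal.ofReal_mul hp.le]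
    _ ≤ ENNReal.ofReal r := ENNReal.ofReal_le_ofReal h2
    _ = P (b ∩ c) := ENNReal.ofReal_toReal (measure_ne_top P _)

lemma aux_upper_inner (hB : B ≤ m) (a : ℝ≥0∞)
    (h : ∀ b c : Set Ω, MeasurableSet[B] b → MeasurableSet[C] c →
      P (b ∩ c) ≤ a * (P b * P c))
    {X : Ω → ℝ≥0∞} (hX : Measurable[B] X) :
    ∀ c : Set Ω, MeasurableSet[C] c →
      ∫⁻ ω in c, X ω ∂P ≤ a * ((∫⁻ ω, X ω ∂P) * P c) := by
  refine @Measurable.ennreal_induction Ω B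
    (fun X => ∀ c : Set Ω, MeasurableSet[C] c →
      ∫⁻ ω in c, X ω ∂P ≤ a * ((∫⁻ ω, X ω ∂P) * P c)) ?_ ?_ ?_ X hX
  · intro k s hs c hc
    rw [lintegral_indicator_const (hB _ hs), lintegral_indicator_const (hB _ hs)]
    have : (P.restrict c) s = P (s ∩ c) := by
      rw [Measure.restrict_apply (hB _ hs)]
    rw [this]
    calc k * P (s ∩ c) ≤ k * (a * (P s * P c)) := mul_le_mul_right (h s c hs hc) k
      _ = a * (k * P s * P c) := by ring
  · intro f g hdisj hf hg ihf ihg c hc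
    have hfm : Measurable[m] f := hf.mono hB le_rfl
    simp only [Pi.add_apply]
    rw [lintegral_add_left hfm, lintegral_add_left hfm]
    calc (∫⁻ ω in c, f ω ∂P) + ∫⁻ ω in c, g ω ∂P
        ≤ a * ((∫⁻ ω, f ω ∂P) * P c) + a * ((∫⁻ ω, g ω ∂P) * P c) :=
          add_le_add (ihf c hc) (ihg c hc)
      _ = a * (((∫⁻ ω, f ω ∂P) + ∫⁻ ω, g ω ∂P) * P c) := by ring
  · intro f hf hmono ih c hc
    have hfm : ∀ n, Measurable[m] (f n) := fun n => (hf n).mono hB le_rfl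
    rw [lintegral_iSup hfm hmono, lintegral_iSup (fun n => hfm n) hmono]
    rw [ENNReal.iSup_mul, ENNReal.mul_iSup]
    exact iSup_mono fun n => ih n c hc

lemma aux_upper (hB : B ≤ m) (hC : C ≤ m) (a : ℝ≥0∞)
    (h : ∀ b c : Set Ω, MeasurableSet[B] b → MeasurableSet[C] c →
      P (b ∩ c) ≤ a * (P b * P c))
    {X : Ω → ℝ≥0∞} (hX : Measurable[B] X) {Y : Ω → ℝ≥0∞} (hY : Measurable[C] Y) :
    ∫⁻ ω, X ω * Y ω ∂P ≤ a * ((∫⁻ ω, X ω ∂P) * ∫⁻ ω, Y ω ∂P) := by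
  refine @Measurable.ennreal_induction Ω C
    (fun Y => ∫⁻ ω, X ω * Y ω ∂P ≤ a * ((∫⁻ ω, X ω ∂P) * ∫⁻ ω, Y ω ∂P)) ?_ ?_ ?_ Y hY
  · intro k s hs
    have hrw : ∀ ω, X ω * (Set.indicator s (fun _ => k)) ω
        = Set.indicator s (fun ω => X ω * k) ω := by
      intro ω
      by_cases hω : ω ∈ s <;> simp [hω]
    calc ∫⁻ ω, X ω * (Set.indicator s (fun _ => k)) ω ∂P
        = ∫⁻ ω, Set.indicator s (fun ω => X ω * k) ω ∂P := lintegral_congr hrw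
      _ = ∫⁻ ω in s, X ω * k ∂P := lintegral_indicator (hC _ hs) _
      _ = (∫⁻ ω in s, X ω ∂P) * k :=
          lintegral_mul_const'' _ ((hX.mono hB le_rfl).aemeasurable)
      _ ≤ (a * ((∫⁻ ω, X ω ∂P) * P s)) * k :=
          mul_le_mul_left (aux_upper_inner B C P hB a h hX s hs) k
      _ = a * ((∫⁻ ω, X ω ∂P) * (k * P s)) := by ring
      _ = a * ((∫⁻ ω, X ω ∂P) * ∫⁻ ω, (Set.indicator s (fun _ => k)) ω ∂P) := by
          rw [lintegral_indicator_const (hC _ hs)]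
  · intro f g hdisj hf hg ihf ihg
    have hfm : Measurable[m] f := hf.mono hC le_rfl
    have hXm : Measurable[m] X := hX.mono hB le_rfl
    have e1 : ∫⁻ ω, X ω * ((f + g) ω) ∂P
        = (∫⁻ ω, X ω * f ω ∂P) + ∫⁻ ω, X ω * g ω ∂P := by
      simp only [Pi.add_apply, mul_add]
      exact lintegral_add_left (hXm.mul hfm) _
    have e2 : ∫⁻ ω, ((f + g) ω) ∂P = (∫⁻ ω, f ω ∂P) + ∫⁻ ω, g ω ∂P := by
      simp only [Pi.add_apply]
      exact lintegral_add_left hfm _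
    rw [e1, e2]
    calc (∫⁻ ω, X ω * f ω ∂P) + ∫⁻ ω, X ω * g ω ∂P
        ≤ a * ((∫⁻ ω, X ω ∂P) * ∫⁻ ω, f ω ∂P) + a * ((∫⁻ ω, X ω ∂P) * ∫⁻ ω, g ω ∂P) :=
          add_le_add ihf ihg
      _ = a * ((∫⁻ ω, X ω ∂P) * ((∫⁻ ω, f ω ∂P) + ∫⁻ ω, g ω ∂P)) := by ring
  · intro f hf hmono ih
    have hfm : ∀ n, Measurable[m] (f n) := fun n => (hf n).mono hC le_rfl
    have hXm : Measurable[m] X := hX.mono hB le_rfl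
    have e1 : ∫⁻ ω, X ω * (⨆ n, f n ω) ∂P = ⨆ n, ∫⁻ ω, X ω * f n ω ∂P := by
      rw [← lintegral_iSup (f := fun n ω => X ω * f n ω) (fun n => hXm.mul (hfm n))
        (fun i j hij ω => mul_le_mul_right (hmono hij ω) _)]
      congr 1; ext ω; exact ENNReal.mul_iSup _ _
    have e2 : ∫⁻ ω, (⨆ n, f n ω) ∂P = ⨆ n, ∫⁻ ω, f n ω ∂P :=
      lintegral_iSup hfm (fun i j hij ω => hmono hij ω)
    rw [e1, e2, ENNReal.mul_iSup, ENNReal.mul_iSup]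
    exact iSup_mono fun n => ih n

lemma aux_lower_inner (hB : B ≤ m) (a : ℝ≥0∞)
    (h : ∀ b c : Set Ω, MeasurableSet[B] b → MeasurableSet[C] c →
      a * (P b * P c) ≤ P (b ∩ c))
    {X : Ω → ℝ≥0∞} (hX : Measurable[B] X) :
    ∀ c : Set Ω, MeasurableSet[C] c →
      a * ((∫⁻ ω, X ω ∂P) * P c) ≤ ∫⁻ ω in c, X ω ∂P := by
  refine @Measurable.ennreal_induction Ω B
    (fun X => ∀ c : Set Ω, MeasurableSet[C] c →
      a * ((∫⁻ ω, X ω ∂P) * P c) ≤ ∫⁻ ω in c, X ω ∂P) ?_ ?_ ?_ X hX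
  · intro k s hs c hc
    rw [lintegral_indicator_const (hB _ hs), lintegral_indicator_const (hB _ hs)]
    have : (P.restrict c) s = P (s ∩ c) := by
      rw [Measure.restrict_apply (hB _ hs)]
    rw [this]
    calc a * (k * P s * P c) = k * (a * (P s * P c)) := by ring
      _ ≤ k * P (s ∩ c) := mul_le_mul_right (h s c hs hc) k
  · intro f g hdisj hf hg ihf ihg c hc
    have hfm : Measurable[m] f := hf.mono hB le_rfl
    simp only [Pi.add_apply]
    rw [lintegral_add_left hfm, lintegral_add_left hfm]
    calc a * (((∫⁻ ω, f ω ∂P) + ∫⁻ ω, g ω ∂P) * P c)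
        = a * ((∫⁻ ω, f ω ∂P) * P c) + a * ((∫⁻ ω, g ω ∂P) * P c) := by ring
      _ ≤ (∫⁻ ω in c, f ω ∂P) + ∫⁻ ω in c, g ω ∂P := add_le_add (ihf c hc) (ihg c hc)
  · intro f hf hmono ih c hc
    have hfm : ∀ n, Measurable[m] (f n) := fun n => (hf n).mono hB le_rfl
    rw [lintegral_iSup hfm hmono, lintegral_iSup (fun n => hfm n) hmono]
    rw [ENNReal.iSup_mul, ENNReal.mul_iSup]
    exact iSup_mono fun n => ih n c hc

lemma aux_lower (hB : B ≤ m) (hC : C ≤ m) (a : ℝ≥0∞)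
    (h : ∀ b c : Set Ω, MeasurableSet[B] b → MeasurableSet[C] c →
      a * (P b * P c) ≤ P (b ∩ c))
    {X : Ω → ℝ≥0∞} (hX : Measurable[B] X) {Y : Ω → ℝ≥0∞} (hY : Measurable[C] Y) :
    a * ((∫⁻ ω, X ω ∂P) * ∫⁻ ω, Y ω ∂P) ≤ ∫⁻ ω, X ω * Y ω ∂P := by
  refine @Measurable.ennreal_induction Ω C
    (fun Y => a * ((∫⁻ ω, X ω ∂P) * ∫⁻ ω, Y ω ∂P) ≤ ∫⁻ ω, X ω * Y ω ∂P) ?_ ?_ ?_ Y hY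
  · intro k s hs
    have hrw : ∀ ω, X ω * (Set.indicator s (fun _ => k)) ω
        = Set.indicator s (fun ω => X ω * k) ω := by
      intro ω
      by_cases hω : ω ∈ s <;> simp [hω]
    calc a * ((∫⁻ ω, X ω ∂P) * ∫⁻ ω, (Set.indicator s (fun _ => k)) ω ∂P)
        = a * ((∫⁻ ω, X ω ∂P) * (k * P s)) := by rw [lintegral_indicator_const (hC _ hs)]
      _ = (a * ((∫⁻ ω, X ω ∂P) * P s)) * k := by ring
      _ ≤ (∫⁻ ω in s, X ω ∂P) * k :=
          mul_le_mul_left (aux_lower_inner B C P hB a h hX s hs) k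
      _ = ∫⁻ ω in s, X ω * k ∂P :=
          (lintegral_mul_const'' _ ((hX.mono hB le_rfl).aemeasurable)).symm
      _ = ∫⁻ ω, Set.indicator s (fun ω => X ω * k) ω ∂P :=
          (lintegral_indicator (hC _ hs) _).symm
      _ = ∫⁻ ω, X ω * (Set.indicator s (fun _ => k)) ω ∂P :=
          (lintegral_congr hrw).symm
  · intro f g hdisj hf hg ihf ihg
    have hfm : Measurable[m] f := hf.mono hC le_rfl
    have hXm : Measurable[m] X := hX.mono hB le_rfl
    have e1 : ∫⁻ ω, X ω * ((f + g) ω) ∂P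
        = (∫⁻ ω, X ω * f ω ∂P) + ∫⁻ ω, X ω * g ω ∂P := by
      simp only [Pi.add_apply, mul_add]
      exact lintegral_add_left (hXm.mul hfm) _
    have e2 : ∫⁻ ω, ((f + g) ω) ∂P = (∫⁻ ω, f ω ∂P) + ∫⁻ ω, g ω ∂P := by
      simp only [Pi.add_apply]
      exact lintegral_add_left hfm _
    rw [e1, e2]
    calc a * ((∫⁻ ω, X ω ∂P) * ((∫⁻ ω, f ω ∂P) + ∫⁻ ω, g ω ∂P))
        = a * ((∫⁻ ω, X ω ∂P) * ∫⁻ ω, f ω ∂P) + a * ((∫⁻ ω, X ω ∂P) * ∫⁻ ω, g ω ∂P) := by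
          ring
      _ ≤ (∫⁻ ω, X ω * f ω ∂P) + ∫⁻ ω, X ω * g ω ∂P := add_le_add ihf ihg
  · intro f hf hmono ih
    have hfm : ∀ n, Measurable[m] (f n) := fun n => (hf n).mono hC le_rfl
    have hXm : Measurable[m] X := hX.mono hB le_rfl
    have e1 : ∫⁻ ω, X ω * (⨆ n, f n ω) ∂P = ⨆ n, ∫⁻ ω, X ω * f n ω ∂P := by
      rw [← lintegral_iSup (f := fun n ω => X ω * f n ω) (fun n => hXm.mul (hfm n))
        (fun i j hij ω => mul_le_mul_right (hmono hij ω) _)]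
      congr 1; ext ω; exact ENNReal.mul_iSup _ _
    have e2 : ∫⁻ ω, (⨆ n, f n ω) ∂P = ⨆ n, ∫⁻ ω, f n ω ∂P :=
      lintegral_iSup hfm (fun i j hij ω => hmono hij ω)
    rw [e1, e2, ENNReal.mul_iSup, ENNReal.mul_iSup]
    exact iSup_mono fun n => ih n

end Aux

theorem psi_dependence_integral_bounds
    {Ω : Type*} [m : MeasurableSpace Ω] (P : Measure Ω) [IsProbabilityMeasure P]
    (B C : MeasurableSpace Ω) (hB : B ≤ m) (hC : C ≤ m)
    (X Y : Ω → ℝ≥0∞) (hX : Measurable[B] X) (hY : Measurable[C] Y) :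
    (∫⁻ ω, X ω * Y ω ∂P ≤ (1 + (@psiDep Ω m P B C)) * ((∫⁻ ω, X ω ∂P) * ∫⁻ ω, Y ω ∂P)) ∧
    ((@psiDep Ω m P B C) < 1 →
      (∫⁻ ω, X ω ∂P) * (∫⁻ ω, Y ω ∂P) ≤ (∫⁻ ω, X ω * Y ω ∂P) / (1 - (@psiDep Ω m P B C))) := by
  constructor
  · exact @aux_upper Ω B C m P ‹_› hB hC (1 + @psiDep Ω m P B C)
      (fun b c hb hc => @psi_set_upper Ω B C m P ‹_› b c hb hc) X hX Y hY
  · intro hψ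
    have h1 : (1 - @psiDep Ω m P B C) * ((∫⁻ ω, X ω ∂P) * ∫⁻ ω, Y ω ∂P)
        ≤ ∫⁻ ω, X ω * Y ω ∂P :=
      @aux_lower Ω B C m P ‹_› hB hC (1 - @psiDep Ω m P B C)
        (fun b c hb hc => @psi_set_lower Ω B C m P ‹_› b c hb hc) X hX Y hY
    have h0 : 1 - @psiDep Ω m P B C ≠ 0 := (tsub_pos_of_lt hψ).ne'
    have hne : 1 - @psiDep Ω m P B C ≠ ∞ :=
      ne_top_of_le_ne_top ENNReal.one_ne_top tsub_le_self
    rw [ENNReal.le_div_iff_mul_le (Or.inl h0) (Or.inl hne), mul_comm]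
    exact h1
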